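/- Let f : [a,b] → ℝ be continuous on [a,b] and differentiable on (a,b), where the interval [a,b] does not contain 0, and let w : [a,b] → ℝ be a nonnegative integrable function. Then for each x ∈ [a,b], |∫ₐᵇ f(t)w(t) dt − (f(x)/x)·∫ₐᵇ t·w(t) dt| ≤ ‖f − ℓf′‖∞ · [ sgn(x)·(∫ₐˣ w(t) dt − ∫ₓᵇ w(t) dt) + (1/|x|)·(∫ₓᵇ t·w(t) dt − ∫ₐˣ t·w(t) dt) ]. -/

import Mathlib

open Set intervalIntegral MeasureTheory

/-- Theorem 4.1: the weighted Ostrowski–Pompeiu inequality. -/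
theorem ostrowski_pompeiu_weighted (a b : ℝ) (f w : ℝ → ℝ)
    (hab : a < b) (h0 : (0:ℝ) ∉ Set.Icc a b)
    (hf : ContinuousOn f (Set.Icc a b))
    (hd : DifferentiableOn ℝ f (Set.Ioo a b))
    (hw0 : ∀ t ∈ Set.Icc a b, 0 ≤ w t)
    (hwi : IntervalIntegrable w MeasureTheory.volume a b)
    (hbdd : BddAbove ((fun ξ => |f ξ - ξ * deriv f ξ|) '' Set.Ioo a b))
    (x : ℝ) (hx : x ∈ Set.Icc a b) :
    |(∫ t in a..b, f t * w t) - f x / x * ∫ t in a..b, t * w t| ≤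
      sSup ((fun ξ => |f ξ - ξ * deriv f ξ|) '' Set.Ioo a b) *
        (Real.sign x * ((∫ t in a..x, w t) - ∫ t in x..b, w t) +
          1 / |x| * ((∫ t in x..b, t * w t) - ∫ t in a..x, t * w t)) := by
  set M := sSup ((fun ξ => |f ξ - ξ * deriv f ξ|) '' Set.Ioo a b) with hM
  have hax : a ≤ x := hx.1
  have hxb : x ≤ b := hx.2
  have hx0 : x ≠ 0 := fun h => h0 (h ▸ hx)
  have hx0' : (0:ℝ) < |x| := abs_pos.mpr hx0
  have hMnn : 0 ≤ M :=
    le_trans (abs_nonneg _) (le_csSup hbdd ⟨(a+b)/2, ⟨by linarith, by linarith⟩, rfl⟩)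
  -- Pompeiu mean value inequality
  have pom : ∀ p q : ℝ, a ≤ p → p < q → q ≤ b → |q * f p - p * f q| ≤ M * (q - p) := by
    intro p q hap hpq hqb
    have hsub : Set.Icc p q ⊆ Set.Icc a b := Set.Icc_subset_Icc hap hqb
    have hsubo : Set.Ioo p q ⊆ Set.Ioo a b := Set.Ioo_subset_Ioo hap hqb
    have hne : ∀ u ∈ Set.Icc p q, u ≠ 0 := fun u hu h => h0 (h ▸ hsub hu)
    have hFc : ContinuousOn (fun u => f u / u) (Set.Icc p q) :=
      (hf.mono hsub).div continuousOn_id hne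
    have hGc : ContinuousOn (fun u : ℝ => u⁻¹) (Set.Icc p q) :=
      continuousOn_id.inv₀ hne
    have hFd : ∀ c ∈ Set.Ioo p q, HasDerivAt (fun u => f u / u)
        ((deriv f c * c - f c * 1) / c ^ 2) c := by
      intro c hc
      have hc0 : c ≠ 0 := hne c (Set.Ioo_subset_Icc_self hc)
      have hdc : DifferentiableAt ℝ f c :=
        (hd c (hsubo hc)).differentiableAt (isOpen_Ioo.mem_nhds (hsubo hc))
      exact hdc.hasDerivAt.div (hasDerivAt_id c) hc0
    have hGd : ∀ c ∈ Set.Ioo p q, HasDerivAt (fun u : ℝ => u⁻¹) (-(c^2)⁻¹) c :=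
      fun c hc => hasDerivAt_inv (hne c (Set.Ioo_subset_Icc_self hc))
    obtain ⟨c, hc, hcc⟩ := exists_ratio_hasDerivAt_eq_ratio_slope (fun u => f u / u)
      (fun c => (deriv f c * c - f c * 1) / c ^ 2) hpq hFc hFd
      (fun u : ℝ => u⁻¹) (fun c => -(c^2)⁻¹) hGc hGd
    have hc0 : c ≠ 0 := hne c (Set.Ioo_subset_Icc_self hc)
    have hp0 : p ≠ 0 := hne p ⟨le_refl p, hpq.le⟩
    have hq0 : q ≠ 0 := hne q ⟨hpq.le, le_refl q⟩
    have hid : q * f p - p * f q = (q - p) * (f c - c * deriv f c) := by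
      field_simp at hcc
      nlinarith [hcc, sq_nonneg c, sq_abs c]
    have hMc : |f c - c * deriv f c| ≤ M := le_csSup hbdd ⟨c, hsubo hc, rfl⟩
    calc |q * f p - p * f q| = (q - p) * |f c - c * deriv f c| := by
          rw [hid, abs_mul, abs_of_nonneg (by linarith : (0:ℝ) ≤ q - p)]
      _ ≤ M * (q - p) := by nlinarith [abs_nonneg (f c - c * deriv f c)]
  -- pointwise bound
  have key : ∀ t ∈ Set.Icc a b, |f t - f x / x * t| ≤ M * (|t - x| / |x|) := by
    intro t ht
    have hkey : |x * f t - t * f x| ≤ M * |t - x| := by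
      rcases lt_trichotomy t x with h | h | h
      · simpa [abs_of_neg (by linarith : t - x < 0)] using pom t x ht.1 h hxb
      · simp [h]
      · have := pom x t hax h ht.2
        rw [abs_sub_comm] at this
        simpa [abs_of_pos (by linarith : (0:ℝ) < t - x)] using this
    have : f t - f x / x * t = (x * f t - t * f x) / x := by field_simp
    rw [this, abs_div]
    rw [div_le_iff₀ hx0'] at *
    calc |x * f t - t * f x| ≤ M * |t - x| := hkey
      _ = M * (|t - x| / |x|) * |x| := by field_simp
  -- integrability
  have huIcc : Set.uIcc a b = Set.Icc a b := Set.uIcc_of_le hab.le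
  have hfw : IntervalIntegrable (fun t => f t * w t) volume a b :=
    hwi.continuousOn_mul (huIcc ▸ hf)
  have hid' : ContinuousOn (fun t : ℝ => t) (Set.uIcc a b) := continuousOn_id
  have htw : IntervalIntegrable (fun t => t * w t) volume a b :=
    hwi.continuousOn_mul hid'
  have hwi1 : IntervalIntegrable w volume a x :=
    hwi.mono_set (by rw [huIcc, Set.uIcc_of_le hax]; exact Set.Icc_subset_Icc_right hxb)
  have hwi2 : IntervalIntegrable w volume x b :=
    hwi.mono_set (by rw [huIcc, Set.uIcc_of_le hxb]; exact Set.Icc_subset_Icc_left hax)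
  have htw1 : IntervalIntegrable (fun t => t * w t) volume a x :=
    hwi1.continuousOn_mul continuousOn_id
  have htw2 : IntervalIntegrable (fun t => t * w t) volume x b :=
    hwi2.continuousOn_mul continuousOn_id
  have habsw : IntervalIntegrable (fun t => |t - x| * w t) volume a b :=
    hwi.continuousOn_mul ((continuousOn_id.sub continuousOn_const).abs)
  have habsw1 : IntervalIntegrable (fun t => |t - x| * w t) volume a x :=
    hwi1.continuousOn_mul ((continuousOn_id.sub continuousOn_const).abs)
  have habsw2 : IntervalIntegrable (fun t => |t - x| * w t) volume x b :=
    hwi2.continuousOn_mul ((continuousOn_id.sub continuousOn_const).abs)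
  have hgw : IntervalIntegrable (fun t => (f t - f x / x * t) * w t) volume a b :=
    hwi.continuousOn_mul ((huIcc ▸ hf).sub (continuousOn_const.mul continuousOn_id))
  -- rewrite LHS
  have hiL : (∫ t in a..b, f t * w t) - f x / x * ∫ t in a..b, t * w t
      = ∫ t in a..b, (f t - f x / x * t) * w t := by
    rw [← intervalIntegral.integral_const_mul,
      ← intervalIntegral.integral_sub hfw (htw.const_mul _)]
    congr 1; ext t; ring
  -- bound the integral
  have step1 : |∫ t in a..b, (f t - f x / x * t) * w t|
      ≤ ∫ t in a..b, M * (|t - x| / |x|) * w t := by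
    refine le_trans (intervalIntegral.abs_integral_le_integral_abs hab.le) ?_
    refine intervalIntegral.integral_mono_on hab.le hgw.abs
      ((habsw.const_mul (M / |x|)).congr ?_) ?_
    · intro t _; show M / |x| * (|t - x| * w t) = M * (|t - x| / |x|) * w t; ring
    · intro t ht
      have h1 : |(f t - f x / x * t) * w t| = |f t - f x / x * t| * w t := by
        rw [abs_mul, abs_of_nonneg (hw0 t ht)]
      rw [h1]
      exact mul_le_mul_of_nonneg_right (key t ht) (hw0 t ht)
  -- compute the piecewise integrals
  have h1 : (∫ t in a..x, |t - x| * w t)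
      = x * (∫ t in a..x, w t) - ∫ t in a..x, t * w t := by
    have e1 : (∫ t in a..x, |t - x| * w t) = ∫ t in a..x, (x * w t - t * w t) := by
      refine intervalIntegral.integral_congr fun t ht => ?_
      rw [Set.uIcc_of_le hax] at ht
      rw [abs_of_nonpos (by linarith [ht.2] : t - x ≤ 0)]; ring
    rw [e1, intervalIntegral.integral_sub (hwi1.const_mul x) htw1,
      intervalIntegral.integral_const_mul]
  have h2 : (∫ t in x..b, |t - x| * w t)
      = (∫ t in x..b, t * w t) - x * ∫ t in x..b, w t := by
    have e2 : (∫ t in x..b, |t - x| * w t) = ∫ t in x..b, (t * w t - x * w t) := by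
      refine intervalIntegral.integral_congr fun t ht => ?_
      rw [Set.uIcc_of_le hxb] at ht
      rw [abs_of_nonneg (by linarith [ht.1] : (0:ℝ) ≤ t - x)]; ring
    rw [e2, intervalIntegral.integral_sub htw2 (hwi2.const_mul x),
      intervalIntegral.integral_const_mul]
  have hsplit : (∫ t in a..x, |t - x| * w t) + (∫ t in x..b, |t - x| * w t)
      = ∫ t in a..b, |t - x| * w t :=
    intervalIntegral.integral_add_adjacent_intervals habsw1 habsw2
  -- compute the RHS-shaped integral
  have step2 : (∫ t in a..b, M * (|t - x| / |x|) * w t)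
      = M * (Real.sign x * ((∫ t in a..x, w t) - ∫ t in x..b, w t) +
          1 / |x| * ((∫ t in x..b, t * w t) - ∫ t in a..x, t * w t)) := by
    have e : (∫ t in a..b, M * (|t - x| / |x|) * w t)
        = (M / |x|) * ∫ t in a..b, |t - x| * w t := by
      rw [← intervalIntegral.integral_const_mul]
      congr 1; ext t; ring
    rw [e, ← hsplit, h1, h2]
    have hsgn : Real.sign x = x / |x| := by
      rcases lt_or_gt_of_ne hx0 with h | h
      · rw [Real.sign_of_neg h, abs_of_neg h]; field_simp
      · rw [Real.sign_of_pos h, abs_of_pos h]; field_simp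
    rw [hsgn]
    field_simp
    ring
  rw [hiL]
  calc |∫ t in a..b, (f t - f x / x * t) * w t|
      ≤ ∫ t in a..b, M * (|t - x| / |x|) * w t := step1
    _ = _ := step2
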